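/- (Zeng's identity) For all positive integers n, m and parameters x, z, q with all denominators nonzero: (q;q)_n/(zq;q)_n times the sum over chains n ≥ i_1 ≥ ... ≥ i_m ≥ 1 of x^{i_m} (zq;q)_{i_m}/(q;q)_{i_m} · ∏_{j=1}^m q^{i_j}/(1 - z q^{i_j}) equals the sum over r from 1 to n of [n choose r]_q · (x^r (x^{-1};q)_r + (-1)^{r-1} q^{binom(r,2)}) q^{m r}/(1 - z q^r)^m. -/

import Mathlib

noncomputable def qPoch (q a : ℝ) (n : ℕ) : ℝ := ∏ j ∈ Finset.range n, (1 - a * q ^ j)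

noncomputable def qBinom (q : ℝ) (n r : ℕ) : ℝ :=
  if r ≤ n then qPoch q q n / (qPoch q q r * qPoch q q (n - r)) else 0

/-- Multiple sum over chains `top ≥ i₁ ≥ ⋯ ≥ i_m ≥ 1` of
`x^{i_m} (zq;q)_{i_m}/(q;q)_{i_m} ∏ q^{i_j}/(1 - z q^{i_j})`. -/
noncomputable def zSum (q z x : ℝ) : ℕ → ℕ → ℝ
  | 0, top => x ^ top * qPoch q (z * q) top / qPoch q q top
  | m + 1, top => ∑ i ∈ Finset.Icc 1 top, q ^ i / (1 - z * q ^ i) * zSum q z x m i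

section helpers

lemma qPoch_succ (q a : ℝ) (n : ℕ) : qPoch q a (n+1) = qPoch q a n * (1 - a * q^n) := by
  simp [qPoch, Finset.prod_range_succ]

lemma qPoch_zero (q a : ℝ) : qPoch q a 0 = 1 := by simp [qPoch]

lemma qPoch_q_ne (q : ℝ) (hden1 : ∀ i : ℕ, 1 ≤ i → 1 - q ^ i ≠ 0) (k : ℕ) :
    qPoch q q k ≠ 0 := by
  induction k with
  | zero => simp [qPoch]
  | succ n ih =>
      rw [qPoch_succ]
      refine mul_ne_zero ih ?_
      have := hden1 (n+1) (by omega)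
      rwa [pow_succ'] at this

lemma qPoch_zq_ne (q z : ℝ) (hden2 : ∀ i : ℕ, 1 ≤ i → 1 - z * q ^ i ≠ 0) (k : ℕ) :
    qPoch q (z * q) k ≠ 0 := by
  induction k with
  | zero => simp [qPoch]
  | succ n ih =>
      rw [qPoch_succ]
      refine mul_ne_zero ih ?_
      have := hden2 (n+1) (by omega)
      rwa [pow_succ', ← mul_assoc] at this

lemma qPoch_zq_succ (q z : ℝ) (n : ℕ) :
    qPoch q (z*q) (n+1) = qPoch q (z*q) n * (1 - z * q^(n+1)) := by
  rw [qPoch_succ]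
  congr 1
  rw [pow_succ']
  ring

lemma qBinom_zero (q : ℝ) (hden1 : ∀ i : ℕ, 1 ≤ i → 1 - q ^ i ≠ 0) (n : ℕ) :
    qBinom q n 0 = 1 := by
  rw [qBinom, if_pos (Nat.zero_le n)]
  simp [qPoch_zero]
  exact qPoch_q_ne q hden1 n

lemma qBinom_self (q : ℝ) (hden1 : ∀ i : ℕ, 1 ≤ i → 1 - q ^ i ≠ 0) (n : ℕ) :
    qBinom q n n = 1 := by
  rw [qBinom, if_pos le_rfl]
  simp [qPoch_zero]
  exact qPoch_q_ne q hden1 n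

lemma qBinom_of_gt (q : ℝ) {n r : ℕ} (h : n < r) : qBinom q n r = 0 := by
  rw [qBinom, if_neg (by omega)]

lemma qBinom_pascal (q : ℝ) (hden1 : ∀ i : ℕ, 1 ≤ i → 1 - q ^ i ≠ 0) (n r : ℕ) :
    qBinom q (n+1) (r+1) = qBinom q n r + q^(r+1) * qBinom q n (r+1) := by
  rcases lt_or_ge n (r+1) with h | h
  · rcases Nat.lt_or_ge n r with h2 | h2
    · rw [qBinom_of_gt q (by omega), qBinom_of_gt q h2, qBinom_of_gt q (by omega)]; ring
    · have : n = r := by omega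
      subst this
      rw [qBinom_self q hden1, qBinom_self q hden1, qBinom_of_gt q (by omega)]; ring
  · obtain ⟨s, rfl⟩ : ∃ s, n = r + 1 + s := ⟨n - (r+1), by omega⟩
    rw [qBinom, if_pos (by omega), qBinom, if_pos (by omega), qBinom, if_pos (by omega)]
    have e1 : r + 1 + s + 1 - (r + 1) = s + 1 := by omega
    have e2 : r + 1 + s - r = s + 1 := by omega
    have e3 : r + 1 + s - (r + 1) = s := by omega
    rw [e1, e2, e3]
    have hr : qPoch q q (r+1) = qPoch q q r * (1 - q^(r+1)) := by
      rw [qPoch_succ, pow_succ']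
    have hs : qPoch q q (s+1) = qPoch q q s * (1 - q^(s+1)) := by
      rw [qPoch_succ, pow_succ']
    have hN : qPoch q q (r+1+s+1) = qPoch q q (r+1+s) * (1 - q^(r+1+s+1)) := by
      rw [qPoch_succ, pow_succ']
    rw [hN, hr, hs]
    have n1 := qPoch_q_ne q hden1 r
    have n2 := qPoch_q_ne q hden1 s
    have n3 := qPoch_q_ne q hden1 (r+1+s)
    have n4 := hden1 (r+1) (by omega)
    have n5 := hden1 (s+1) (by omega)
    field_simp
    ring

lemma qNewton (q y : ℝ) (hden1 : ∀ i : ℕ, 1 ≤ i → 1 - q ^ i ≠ 0) (n : ℕ) :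
    y ^ n = ∑ r ∈ Finset.range (n+1), qBinom q n r * ∏ i ∈ Finset.range r, (y - q^i) := by
  induction n with
  | zero => simp [qBinom_zero q hden1]
  | succ n ih =>
      have key : ∀ r : ℕ, y * ∏ i ∈ Finset.range r, (y - q^i)
          = (∏ i ∈ Finset.range (r+1), (y - q^i)) + q^r * ∏ i ∈ Finset.range r, (y - q^i) := by
        intro r
        rw [Finset.prod_range_succ]; ring
      rw [pow_succ, mul_comm, ih, Finset.mul_sum]
      rw [Finset.sum_range_succ' (fun r => qBinom q (n+1) r * ∏ i ∈ Finset.range r, (y - q^i))]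
      simp only [qBinom_pascal q hden1, qBinom_zero q hden1]
      have : ∀ r ∈ Finset.range (n+1),
          y * (qBinom q n r * ∏ i ∈ Finset.range r, (y - q^i))
          = qBinom q n r * ∏ i ∈ Finset.range (r+1), (y - q^i)
            + q^r * qBinom q n r * ∏ i ∈ Finset.range r, (y - q^i) := by
        intro r _
        rw [← mul_assoc, mul_comm y (qBinom q n r), mul_assoc, key r]; ring
      rw [Finset.sum_congr rfl this, Finset.sum_add_distrib]
      simp only [add_mul, Finset.sum_add_distrib, Finset.prod_range_zero, mul_one, one_mul]
      have sub : ∑ r ∈ Finset.range (n+1), q^r * qBinom q n r * ∏ i ∈ Finset.range r, (y - q^i)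
          = (∑ r ∈ Finset.range (n+1),
              q^(r+1) * qBinom q n (r+1) * ∏ i ∈ Finset.range (r+1), (y - q^i)) + 1 := by
        rw [Finset.sum_range_succ'
          (fun r => q^r * qBinom q n r * ∏ i ∈ Finset.range r, (y - q^i))]
        rw [Finset.sum_range_succ
          (fun r => q^(r+1) * qBinom q n (r+1) * ∏ i ∈ Finset.range (r+1), (y - q^i))]
        rw [qBinom_of_gt q (by omega : n < n+1)]
        simp [qBinom_zero q hden1]
      rw [sub]
      have e1 : ∀ r ∈ Finset.range (n+1),
          q^(r+1) * qBinom q n (r+1) * ∏ i ∈ Finset.range (r+1), (y - q^i)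
          = q^(r+1) * (qBinom q n (r+1) * ∏ i ∈ Finset.range (r+1), (y - q^i)) := by
        intro r _; ring
      rw [Finset.sum_congr rfl e1]
      ring

lemma telescope (q z : ℝ) (hden1 : ∀ i : ℕ, 1 ≤ i → 1 - q ^ i ≠ 0)
    (hden2 : ∀ i : ℕ, 1 ≤ i → 1 - z * q ^ i ≠ 0) (r : ℕ) (hr : 1 ≤ r) :
    ∀ n, r ≤ n →
    ∑ i ∈ Finset.Icc r n, q^i * qBinom q i r * qPoch q (z*q) (i-1) / qPoch q q i
      = q^r * qBinom q n r * qPoch q (z*q) n / (qPoch q q n * (1 - z*q^r)) := by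
  intro n hn
  induction n, hn using Nat.le_induction with
  | base =>
      rw [Finset.Icc_self, Finset.sum_singleton, qBinom_self q hden1]
      obtain ⟨t, rfl⟩ : ∃ t, r = t + 1 := ⟨r - 1, by omega⟩
      have e : t + 1 - 1 = t := rfl
      rw [e, qPoch_zq_succ]
      have n1 := qPoch_q_ne q hden1 (t+1)
      have n2 := hden2 (t+1) (by omega)
      have n2' : 1 - q^(t+1)*z ≠ 0 := by rwa [mul_comm] at n2
      field_simp
  | succ n hn ih =>
      rw [Finset.sum_Icc_succ_top (by omega : r ≤ n + 1), ih]
      have e : n + 1 - 1 = n := rfl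
      rw [e]
      obtain ⟨s, rfl⟩ : ∃ s, n = r + s := ⟨n - r, by omega⟩
      rw [qBinom, if_pos (by omega : r ≤ r + s), qBinom, if_pos (by omega : r ≤ r + s + 1)]
      have e2 : r + s - r = s := by omega
      have e3 : r + s + 1 - r = s + 1 := by omega
      rw [e2, e3, qPoch_zq_succ]
      have hs1 : qPoch q q (s+1) = qPoch q q s * (1 - q^(s+1)) := by
        rw [qPoch_succ, pow_succ']
      have hN : qPoch q q (r+s+1) = qPoch q q (r+s) * (1 - q^(r+s+1)) := by
        rw [qPoch_succ, pow_succ']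
      rw [hs1, hN]
      have n1 := qPoch_q_ne q hden1 r
      have n2 := qPoch_q_ne q hden1 s
      have n3 := qPoch_q_ne q hden1 (r+s)
      have n4 := hden1 (s+1) (by omega)
      have n5 := hden1 (r+s+1) (by omega)
      have n6 := hden2 r hr
      have n7 := hden2 (r+s+1) (by omega)
      have n8 := qPoch_zq_ne q z hden2 (r+s)
      have n6' : 1 - q^r*z ≠ 0 := by rwa [mul_comm] at n6
      field_simp
      ring

lemma sum_range_succ_split (f : ℕ → ℝ) (n : ℕ) :
    ∑ r ∈ Finset.range (n+1), f r = f 0 + ∑ r ∈ Finset.Icc 1 n, f r := by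
  rw [Finset.range_eq_Ico, ← Finset.Ico_add_one_right_eq_Icc]
  rw [← Finset.sum_Ico_consecutive f (by omega : 0 ≤ 1) (by omega : 1 ≤ n + 1)]
  congr 1
  simp

lemma prodx (q x : ℝ) (hx : x ≠ 0) (r : ℕ) :
    x ^ r * qPoch q x⁻¹ r = ∏ i ∈ Finset.range r, (x - q^i) := by
  have e : x ^ r = ∏ _i ∈ Finset.range r, x := by simp
  rw [qPoch, e, ← Finset.prod_mul_distrib]
  apply Finset.prod_congr rfl
  intro i _
  field_simp

lemma gauss_sum (r : ℕ) : ∑ i ∈ Finset.range r, i = r * (r-1) / 2 := by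
  have h := Finset.sum_range_id_mul_two r
  omega

lemma prod0 (q : ℝ) (r : ℕ) :
    ∏ i ∈ Finset.range r, ((0:ℝ) - q^i) = (-1)^r * q^(r*(r-1)/2) := by
  have : ∀ i ∈ Finset.range r, ((0:ℝ) - q^i) = (-1) * q^i := by intro i _; ring
  rw [Finset.prod_congr rfl this, Finset.prod_mul_distrib, Finset.prod_const,
    Finset.prod_pow_eq_pow_sum, Finset.card_range, gauss_sum]

lemma zeng_aux (q z x : ℝ) (hx : x ≠ 0)
    (hden1 : ∀ i : ℕ, 1 ≤ i → 1 - q ^ i ≠ 0)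
    (hden2 : ∀ i : ℕ, 1 ≤ i → 1 - z * q ^ i ≠ 0) (m : ℕ) :
    ∀ n : ℕ, 1 ≤ n →
    qPoch q q n / qPoch q (z * q) n * zSum q z x m n =
      ∑ r ∈ Finset.Icc 1 n,
        qBinom q n r * (x ^ r * qPoch q x⁻¹ r + (-1) ^ (r - 1) * q ^ (r * (r - 1) / 2)) *
          q ^ (m * r) / (1 - z * q ^ r) ^ m := by
  induction m with
  | zero =>
      intro n hn
      simp only [zSum, Nat.zero_mul, pow_zero, mul_one, div_one]
      have n1 := qPoch_q_ne q hden1 n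
      have n2 := qPoch_zq_ne q z hden2 n
      have lhs : qPoch q q n / qPoch q (z * q) n * (x ^ n * qPoch q (z * q) n / qPoch q q n)
          = x ^ n := by field_simp
      rw [lhs]
      have hA : ∀ r ∈ Finset.Icc 1 n,
          qBinom q n r * (x ^ r * qPoch q x⁻¹ r + (-1) ^ (r - 1) * q ^ (r * (r - 1) / 2))
          = qBinom q n r * ∏ i ∈ Finset.range r, (x - q^i)
            - qBinom q n r * ∏ i ∈ Finset.range r, ((0:ℝ) - q^i) := by
        intro r hr
        rw [Finset.mem_Icc] at hr
        obtain ⟨t, rfl⟩ : ∃ t, r = t + 1 := ⟨r - 1, by omega⟩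
        rw [prodx q x hx, prod0]
        have e : t + 1 - 1 = t := rfl
        rw [e, pow_succ]
        ring
      rw [Finset.sum_congr rfl hA, Finset.sum_sub_distrib]
      have h1 : ∑ r ∈ Finset.Icc 1 n, qBinom q n r * ∏ i ∈ Finset.range r, (x - q^i)
          = x ^ n - 1 := by
        have := qNewton q x hden1 n
        rw [sum_range_succ_split (fun r => qBinom q n r * ∏ i ∈ Finset.range r, (x - q^i)) n]
          at this
        simp only [Finset.prod_range_zero, mul_one, qBinom_zero q hden1] at this
        linarith
      have h2 : ∑ r ∈ Finset.Icc 1 n, qBinom q n r * ∏ i ∈ Finset.range r, ((0:ℝ) - q^i)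
          = (0:ℝ) ^ n - 1 := by
        have := qNewton q 0 hden1 n
        rw [sum_range_succ_split (fun r => qBinom q n r * ∏ i ∈ Finset.range r, ((0:ℝ) - q^i)) n]
          at this
        simp only [Finset.prod_range_zero, mul_one, qBinom_zero q hden1] at this
        linarith
      rw [h1, h2, zero_pow (by omega : n ≠ 0)]
      ring
  | succ m ih =>
      intro n hn
      set A : ℕ → ℝ :=
        fun r => x ^ r * qPoch q x⁻¹ r + (-1) ^ (r - 1) * q ^ (r * (r - 1) / 2) with hA
      show qPoch q q n / qPoch q (z * q) n
          * ∑ i ∈ Finset.Icc 1 n, q ^ i / (1 - z * q ^ i) * zSum q z x m i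
        = ∑ r ∈ Finset.Icc 1 n, qBinom q n r * A r * q ^ ((m+1) * r) / (1 - z * q ^ r) ^ (m+1)
      have step1 : ∀ i ∈ Finset.Icc 1 n, zSum q z x m i
          = qPoch q (z * q) i / qPoch q q i
            * ∑ r ∈ Finset.Icc 1 i, qBinom q i r * A r * q ^ (m * r) / (1 - z * q ^ r) ^ m := by
        intro i hi
        rw [Finset.mem_Icc] at hi
        rw [← ih i hi.1]
        have n1 := qPoch_q_ne q hden1 i
        have n2 := qPoch_zq_ne q z hden2 i
        field_simp
      have expand : ∀ i ∈ Finset.Icc 1 n,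
          qPoch q q n / qPoch q (z * q) n * (q ^ i / (1 - z * q ^ i) * zSum q z x m i)
          = ∑ r ∈ Finset.Icc 1 i,
              (A r * q ^ (m * r) / (1 - z * q ^ r) ^ m) * (qPoch q q n / qPoch q (z * q) n)
                * (q ^ i * qBinom q i r * qPoch q (z*q) (i-1) / qPoch q q i) := by
        intro i hi
        rw [step1 i hi]
        rw [Finset.mem_Icc] at hi
        rw [Finset.mul_sum, Finset.mul_sum, Finset.mul_sum]
        apply Finset.sum_congr rfl
        intro r hr
        rw [Finset.mem_Icc] at hr
        obtain ⟨t, rfl⟩ : ∃ t, i = t + 1 := ⟨i - 1, by omega⟩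
        have e : t + 1 - 1 = t := rfl
        rw [e, qPoch_zq_succ]
        have n1 := qPoch_q_ne q hden1 (t+1)
        have n2 := hden2 (t+1) (by omega)
        have n3 := qPoch_q_ne q hden1 n
        have n4 := qPoch_zq_ne q z hden2 n
        have n5 : (1 - z*q^r)^m ≠ 0 := pow_ne_zero _ (hden2 r hr.1)
        have n6 := qPoch_zq_ne q z hden2 t
        field_simp
      rw [Finset.mul_sum, Finset.sum_congr rfl expand]
      -- swap the double sum
      have swap : ∀ f : ℕ → ℕ → ℝ,
          ∑ i ∈ Finset.Icc 1 n, ∑ r ∈ Finset.Icc 1 i, f i r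
            = ∑ r ∈ Finset.Icc 1 n, ∑ i ∈ Finset.Icc r n, f i r := by
        intro f
        rw [Finset.sum_sigma', Finset.sum_sigma']
        apply Finset.sum_nbij' (fun p => ⟨p.2, p.1⟩) (fun p => ⟨p.2, p.1⟩) <;>
          simp <;> omega
      rw [swap]
      apply Finset.sum_congr rfl
      intro r hr
      rw [Finset.mem_Icc] at hr
      rw [← Finset.mul_sum, telescope q z hden1 hden2 r hr.1 n hr.2]
      have n1 := qPoch_q_ne q hden1 n
      have n2 := qPoch_zq_ne q z hden2 n
      have n3 := hden2 r hr.1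
      rw [show (m+1) * r = m * r + r by ring, pow_add, pow_succ]
      field_simp

end helpers

/-- Zeng's identity. -/
theorem zeng (q z x : ℝ) (n m : ℕ) (hn : 0 < n) (hm : 0 < m) (hx : x ≠ 0)
    (hden1 : ∀ i : ℕ, 1 ≤ i → 1 - q ^ i ≠ 0)
    (hden2 : ∀ i : ℕ, 1 ≤ i → 1 - z * q ^ i ≠ 0) :
    qPoch q q n / qPoch q (z * q) n * zSum q z x m n =
      ∑ r ∈ Finset.Icc 1 n,
        qBinom q n r * (x ^ r * qPoch q x⁻¹ r + (-1) ^ (r - 1) * q ^ (r * (r - 1) / 2)) *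
          q ^ (m * r) / (1 - z * q ^ r) ^ m := by
  exact zeng_aux q z x hx hden1 hden2 m n hn
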